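/- Averaged isoperimetric inequality for families of downsets: let C_1, ..., C_l ⊆ 2^{[n]} be downsets satisfying the antichain condition, i.e., ∂C_i ⊆ C_j for all i, j. If the average cardinality E[C] = (1/l)Σ_m |C_m| equals C(n,0)+C(n,1)+...+C(n,k−1)+p·C(n,k) for some integer k ≥ 0 and real 0 ≤ p < 1, then the average upper-shadow size E[δC] = (1/l)Σ_m |δC_m| is at least C(n,1)+C(n,2)+...+C(n,k)+p·C(n,k+1). -/

import Mathlib

open Finset

noncomputable def bl (n k : ℕ) : ℝ := ∑ i ∈ Finset.range k, (n.choose i : ℝ)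

noncomputable def lineF (n k : ℕ) (s : ℝ) : ℝ :=
  (bl n (k+1) - 1) + (s - bl n k) * (((n - k : ℕ) : ℝ) / (k+1))

noncomputable def ff (n : ℕ) (s : ℝ) : ℝ :=
  (Finset.range (n+1)).inf' ⟨0, by simp⟩ (fun k => lineF n k s)

lemma bl_succ (n k : ℕ) : bl n (k+1) = bl n k + (n.choose k : ℝ) := by
  simp [bl, Finset.sum_range_succ]

lemma bl_zero (n : ℕ) : bl n 0 = 0 := by simp [bl]

lemma bl_one (n : ℕ) : bl n 1 = 1 := by simp [bl]

lemma bl_mono (n : ℕ) {j k : ℕ} (h : j ≤ k) : bl n j ≤ bl n k := by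
  rw [bl, bl, ← Finset.sum_range_add_sum_Ico _ h]
  have : (0:ℝ) ≤ ∑ i ∈ Finset.Ico j k, (n.choose i : ℝ) :=
    Finset.sum_nonneg fun i _ => by positivity
  linarith

lemma bl_full (n k : ℕ) (hk : n + 1 ≤ k) : bl n k = 2 ^ n := by
  induction k with
  | zero => omega
  | succ m ih =>
    rcases Nat.lt_or_ge m (n+1) with h | h
    · have hm : m = n := by omega
      subst hm
      rw [bl, ← Nat.cast_sum, Nat.sum_range_choose]
      push_cast; ring
    · rw [bl_succ, ih h, Nat.choose_eq_zero_of_lt (by omega)]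
      simp

lemma choose_mul_ratio (n k : ℕ) :
    (n.choose k : ℝ) * (((n - k : ℕ) : ℝ) / (k+1)) = n.choose (k+1) := by
  have h := Nat.choose_succ_right_eq n k
  have h' : ((n.choose (k+1) * (k+1) : ℕ) : ℝ) = ((n.choose k * (n - k) : ℕ) : ℝ) := by
    rw [h]
  push_cast at h'
  have hk : (0:ℝ) < (k:ℝ) + 1 := by positivity
  field_simp
  linarith

lemma ratio_mono (n : ℕ) {j k : ℕ} (hjk : j ≤ k) :
    ((n - k : ℕ) : ℝ) / (k+1) ≤ ((n - j : ℕ) : ℝ) / (j+1) := by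
  rw [div_le_div_iff₀ (by positivity) (by positivity)]
  have h1 : (n - k) * (j+1) ≤ (n - j) * (k+1) :=
    Nat.mul_le_mul (Nat.sub_le_sub_left hjk n) (by omega)
  calc ((n - k : ℕ) : ℝ) * ((j:ℝ)+1) = (((n-k) * (j+1) : ℕ) : ℝ) := by push_cast; ring
    _ ≤ (((n-j)*(k+1) : ℕ) : ℝ) := Nat.cast_le.mpr h1
    _ = ((n - j : ℕ) : ℝ) * ((k:ℝ)+1) := by push_cast; ring

/-- key termwise inequalities -/
lemma term_le {n j i : ℕ} (hji : j ≤ i) :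
    (n.choose (i+1) : ℝ) ≤ (n.choose i : ℝ) * (((n - j : ℕ) : ℝ) / (j+1)) := by
  rw [← choose_mul_ratio n i]
  exact mul_le_mul_of_nonneg_left (ratio_mono n hji) (by positivity)

lemma term_ge {n j i : ℕ} (hij : i ≤ j) :
    (n.choose i : ℝ) * (((n - j : ℕ) : ℝ) / (j+1)) ≤ (n.choose (i+1) : ℝ) := by
  rw [← choose_mul_ratio n i]
  exact mul_le_mul_of_nonneg_left (ratio_mono n hij) (by positivity)

lemma line_breakpoint (n : ℕ) {j : ℕ} (k : ℕ) :
    bl n (k+1) - 1 ≤ lineF n j (bl n k) := by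
  have hsum : ∀ a b : ℕ, a ≤ b → bl n b - bl n a = ∑ i ∈ Finset.Ico a b, (n.choose i : ℝ) := by
    intro a b hab
    rw [bl, bl, ← Finset.sum_range_add_sum_Ico _ hab]; ring
  rcases Nat.le_total j k with h | h
  · -- goal ⟺ bl(k+1) − bl(j+1) ≤ (bl k − bl j)·ρ_j
    have e1 : bl n (k+1) - bl n (j+1) = ∑ i ∈ Finset.Ico j k, (n.choose (i+1) : ℝ) := by
      rw [hsum (j+1) (k+1) (by omega)]
      rw [Finset.sum_Ico_eq_sum_range, Finset.sum_Ico_eq_sum_range]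
      simp only [Nat.add_sub_add_right]
      apply Finset.sum_congr rfl; intro i _; ring_nf
    have e2 : bl n k - bl n j = ∑ i ∈ Finset.Ico j k, (n.choose i : ℝ) := hsum j k h
    have key : ∑ i ∈ Finset.Ico j k, (n.choose (i+1) : ℝ)
        ≤ ∑ i ∈ Finset.Ico j k, (n.choose i : ℝ) * (((n - j : ℕ) : ℝ) / (j+1)) := by
      apply Finset.sum_le_sum
      intro i hi
      exact term_le (Finset.mem_Ico.mp hi).1
    simp only [lineF]
    rw [show (bl n k - bl n j) = ∑ i ∈ Finset.Ico j k, (n.choose i : ℝ) from e2] at *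
    have : bl n (k+1) = bl n (j+1) + ∑ i ∈ Finset.Ico j k, (n.choose (i+1) : ℝ) := by
      linarith [e1]
    rw [this, Finset.sum_mul] at *
    have : ∑ i ∈ Finset.Ico j k, (n.choose i : ℝ) * (((n - j : ℕ) : ℝ) / (j+1))
        = ∑ i ∈ Finset.Ico j k, (n.choose i : ℝ) * (((n - j : ℕ) : ℝ) / ((j:ℝ)+1)) := by
      norm_num
    linarith [key]
  · -- k ≤ j
    have e1 : bl n (j+1) - bl n (k+1) = ∑ i ∈ Finset.Ico k j, (n.choose (i+1) : ℝ) := by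
      rw [hsum (k+1) (j+1) (by omega)]
      rw [Finset.sum_Ico_eq_sum_range, Finset.sum_Ico_eq_sum_range]
      simp only [Nat.add_sub_add_right]
      apply Finset.sum_congr rfl; intro i _; ring_nf
    have e2 : bl n j - bl n k = ∑ i ∈ Finset.Ico k j, (n.choose i : ℝ) := hsum k j h
    have key : ∑ i ∈ Finset.Ico k j, (n.choose i : ℝ) * (((n - j : ℕ) : ℝ) / (j+1))
        ≤ ∑ i ∈ Finset.Ico k j, (n.choose (i+1) : ℝ) := by
      apply Finset.sum_le_sum
      intro i hi
      exact term_ge (by have := (Finset.mem_Ico.mp hi).2; omega)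
    simp only [lineF]
    have e3 : (bl n k - bl n j) * (((n - j : ℕ) : ℝ) / ((j:ℝ)+1))
        = -(∑ i ∈ Finset.Ico k j, (n.choose i : ℝ) * (((n - j : ℕ) : ℝ) / ((j:ℝ)+1))) := by
      rw [← Finset.sum_mul]
      have : bl n k - bl n j = -(∑ i ∈ Finset.Ico k j, (n.choose i : ℝ)) := by linarith [e2]
      rw [this]; ring
    rw [e3]
    have key' : ∑ i ∈ Finset.Ico k j, (n.choose i : ℝ) * (((n - j : ℕ) : ℝ) / ((j:ℝ)+1))
        ≤ ∑ i ∈ Finset.Ico k j, (n.choose (i+1) : ℝ) := by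
      convert key using 2
    linarith [e1, key']

lemma line_affine (n j : ℕ) (u v θ : ℝ) :
    lineF n j (θ*u + (1-θ)*v) = θ * lineF n j u + (1-θ) * lineF n j v := by
  simp only [lineF]; ring

lemma ff_le_line (n : ℕ) {j : ℕ} (hj : j ≤ n) (s : ℝ) : ff n s ≤ lineF n j s :=
  Finset.inf'_le _ (Finset.mem_range.mpr (by omega))

lemma ff_conc (n : ℕ) {θ : ℝ} (h0 : 0 ≤ θ) (h1 : θ ≤ 1) (u v : ℝ) :
    θ * ff n u + (1-θ) * ff n v ≤ ff n (θ*u + (1-θ)*v) := by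
  apply Finset.le_inf'
  intro j hj
  have hj' : j ≤ n := by have := Finset.mem_range.mp hj; omega
  rw [line_affine]
  have := ff_le_line n hj' u
  have := ff_le_line n hj' v
  nlinarith

lemma ff_mono (n : ℕ) {s t : ℝ} (hst : s ≤ t) : ff n s ≤ ff n t := by
  apply Finset.le_inf'
  intro j hj
  have hj' : j ≤ n := by have := Finset.mem_range.mp hj; omega
  calc ff n s ≤ lineF n j s := ff_le_line n hj' s
    _ ≤ lineF n j t := by
        simp only [lineF]
        have : (0:ℝ) ≤ ((n - j : ℕ) : ℝ) / ((j:ℝ)+1) := by positivity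
        nlinarith

lemma ff_rep (n k : ℕ) {p : ℝ} (hp0 : 0 ≤ p) (hp1 : p ≤ 1) :
    ff n (bl n k + p * (n.choose k : ℝ)) = bl n (k+1) - 1 + p * (n.choose (k+1) : ℝ) := by
  apply le_antisymm
  · rcases Nat.lt_or_ge k (n+1) with hk | hk
    · have hk' : k ≤ n := by omega
      calc ff n (bl n k + p * (n.choose k : ℝ)) ≤ lineF n k (bl n k + p * (n.choose k : ℝ)) :=
            ff_le_line n hk' _
        _ = bl n (k+1) - 1 + p * ((n.choose k : ℝ) * (((n-k : ℕ):ℝ)/((k:ℝ)+1))) := by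
            simp only [lineF]; ring
        _ = bl n (k+1) - 1 + p * (n.choose (k+1) : ℝ) := by rw [choose_mul_ratio]
    · -- n + 1 ≤ k : degenerate
      have hck : (n.choose k : ℝ) = 0 := by
        exact_mod_cast Nat.choose_eq_zero_of_lt (by omega)
      have hck1 : (n.choose (k+1) : ℝ) = 0 := by
        exact_mod_cast Nat.choose_eq_zero_of_lt (by omega)
      have hbk : bl n k = 2^n := bl_full n k hk
      have hbk1 : bl n (k+1) = 2^n := bl_full n (k+1) (by omega)
      rw [hck, hck1, hbk, hbk1]
      calc ff n (2^n + p*0) = ff n ((2:ℝ)^n) := by norm_num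
        _ ≤ lineF n n ((2:ℝ)^n) := ff_le_line n le_rfl _
        _ = bl n (n+1) - 1 := by simp [lineF]
        _ = 2^n - 1 + p * 0 := by rw [bl_full n (n+1) le_rfl]; ring
  · apply Finset.le_inf'
    intro j hj
    have heq : bl n k + p * (n.choose k : ℝ) = (1-p) * (bl n k) + p * (bl n (k+1)) := by
      rw [bl_succ]; ring
    have affn : lineF n j (bl n k + p * (n.choose k : ℝ))
        = p * lineF n j (bl n (k+1)) + (1-p) * lineF n j (bl n k) := by
      rw [heq, show (1-p) * (bl n k) + p * (bl n (k+1)) = p * (bl n (k+1)) + (1-p) * (bl n k) by ring]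
      rw [← line_affine n j (bl n (k+1)) (bl n k) p]
    rw [affn]
    have b1 := line_breakpoint n (j := j) k
    have b2 := line_breakpoint n (j := j) (k+1)
    have : bl n (k+1) - 1 + p * (n.choose (k+1) : ℝ)
        = p * (bl n (k+2) - 1) + (1-p) * (bl n (k+1) - 1) := by
      rw [bl_succ n (k+1)]; ring
    rw [this]
    nlinarith

lemma ff_pair (n : ℕ) {a b d : ℝ} (hab : a ≤ b) (hbd : b ≤ d) :
    ff n a + ff n d ≤ ff n b + ff n (a + d - b) := by
  rcases eq_or_lt_of_le (hab.trans hbd) with heq | hlt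
  · have hba : b = a := le_antisymm (heq ▸ hbd) hab
    rw [hba]
    have : a + d - a = d := by ring
    rw [this]
  · set θ := (b - a)/(d - a) with hθ
    have hθ0 : 0 ≤ θ := by apply div_nonneg <;> linarith
    have hθ1 : θ ≤ 1 := by rw [div_le_one (by linarith)]; linarith
    clear_value θ
    have hda : d - a ≠ 0 := by intro h; linarith [sub_eq_zero.mp h]
    have hθd : θ * (d - a) = b - a := by
      rw [hθ, div_mul_cancel₀ _ hda]
    have hb : b = θ*d + (1-θ)*a := by linear_combination -hθd
    have hc : a + d - b = θ*a + (1-θ)*d := by linear_combination hθd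
    have c1 := ff_conc n hθ0 hθ1 d a
    have c2 : (θ*(ff n a) + (1-θ)*(ff n d)) ≤ ff n (θ*a + (1-θ)*d) := ff_conc n hθ0 hθ1 a d
    rw [← hb] at c1
    rw [← hc] at c2
    nlinarith

lemma rep_exists (n : ℕ) {x : ℝ} (hx0 : 0 ≤ x) (hx1 : x ≤ 2^n) :
    ∃ k ≤ n, ∃ p : ℝ, 0 ≤ p ∧ p ≤ 1 ∧ x = bl n k + p * (n.choose k : ℝ) := by
  classical
  have hP0 : bl n 0 ≤ x := by simp [bl_zero]; exact hx0
  set k := Nat.findGreatest (fun j => bl n j ≤ x) n with hkdef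
  have hkn : k ≤ n := Nat.findGreatest_le n
  have hPk : bl n k ≤ x := Nat.findGreatest_spec (P := fun j => bl n j ≤ x) (Nat.zero_le n) hP0
  have hup : x ≤ bl n (k+1) := by
    rcases Nat.lt_or_ge k n with h | h
    · by_contra hc
      push_neg at hc
      exact Nat.findGreatest_is_greatest (Nat.lt_succ_self k) (by omega) (le_of_lt hc)
    · have hkn' : k = n := by omega
      rw [hkn', bl_full n (n+1) le_rfl]
      exact hx1
  have hcpos : (0:ℝ) < (n.choose k : ℝ) := by
    exact_mod_cast Nat.choose_pos hkn
  refine ⟨k, hkn, (x - bl n k)/(n.choose k : ℝ), ?_, ?_, ?_⟩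
  · apply div_nonneg _ (le_of_lt hcpos)
    have : bl n k ≤ x := hPk
    linarith
  · rw [div_le_one hcpos]
    have := bl_succ n k
    linarith
  · field_simp; ring

lemma bl_pascal (n : ℕ) : ∀ j, bl (n+1) (j+1) = bl n (j+1) + bl n j := by
  intro j
  induction j with
  | zero => simp [bl_one, bl_zero]
  | succ m ih =>
    rw [bl_succ (n+1) (m+1), ih, bl_succ n (m+1), bl_succ n m]
    have : ((n+1).choose (m+1) : ℝ) = (n.choose m : ℝ) + (n.choose (m+1) : ℝ) := by
      exact_mod_cast congrArg (fun x : ℕ => (x:ℝ)) (Nat.choose_succ_succ n m)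
    rw [this]; ring

lemma glue (n : ℕ) {x y : ℝ} (hy : 0 ≤ y) (hyx : y ≤ x) (hx : x ≤ 2^n) :
    ff (n+1) (x + y) ≤ ff n x + max x (ff n y + 1) := by
  have hs0 : 0 ≤ x + y := by linarith
  have hs1 : x + y ≤ 2^(n+1) := by
    have : (2:ℝ)^(n+1) = 2^n + 2^n := by ring
    linarith
  obtain ⟨a, han, p, hp0, hp1, hs⟩ := rep_exists (n+1) hs0 hs1
  have hffs : ff (n+1) (x+y) = bl (n+1) (a+1) - 1 + p * ((n+1).choose (a+1) : ℝ) := by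
    rw [hs]; exact ff_rep (n+1) a hp0 hp1
  rcases Nat.eq_zero_or_pos a with rfl | hapos
  · -- a = 0 : x + y = p ≤ 1
    have hsp : x + y = p := by
      rw [hs]; simp [bl_zero]
    have hval : ff (n+1) (x+y) = p * ((n:ℝ)+1) := by
      rw [hffs]
      have : ((n+1).choose 1 : ℝ) = (n:ℝ)+1 := by
        rw [Nat.choose_one_right]; push_cast; ring
      rw [this, bl_one]; ring
    have hx1 : x ≤ 1 := by linarith
    have hy1 : y ≤ 1 := by linarith
    have hx0 : 0 ≤ x := le_trans hy hyx
    have hff1 : ff n 1 = (n:ℝ) := by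
      have := ff_rep n 1 (le_refl (0:ℝ)) zero_le_one
      simp only [zero_mul, add_zero] at this
      rw [bl_one] at this
      rw [this, bl_succ n 1, bl_one, Nat.choose_one_right]; ring
    have hff0 : ff n 0 = 0 := by
      have := ff_rep n 0 (le_refl (0:ℝ)) zero_le_one
      simp only [zero_mul, add_zero] at this
      rw [bl_zero, bl_one] at this
      simpa using this
    have hcx : (n:ℝ) * x ≤ ff n x := by
      have := ff_conc n hx0 hx1 1 0
      rw [hff1, hff0] at this
      calc (n:ℝ)*x = x*(n:ℝ) + (1-x)*0 := by ring
        _ ≤ ff n (x*1 + (1-x)*0) := this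
        _ = ff n x := by norm_num
    have hcy : (n:ℝ) * y ≤ ff n y := by
      have := ff_conc n hy hy1 1 0
      rw [hff1, hff0] at this
      calc (n:ℝ)*y = y*(n:ℝ) + (1-y)*0 := by ring
        _ ≤ ff n (y*1 + (1-y)*0) := this
        _ = ff n y := by norm_num
    have hmax : ff n y + 1 ≤ max x (ff n y + 1) := le_max_right _ _
    have hp1' : p ≤ 1 := hp1
    rw [hval]
    have : p * ((n:ℝ)+1) ≤ (n:ℝ)*x + ((n:ℝ)*y + 1) := by
      have hps : p = x + y := hsp.symm
      rw [hps]
      nlinarith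
    linarith
  · -- a = a' + 1
    obtain ⟨a', rfl⟩ : ∃ a', a = a' + 1 := ⟨a - 1, by omega⟩
    set xs := bl n (a'+1) + p * (n.choose (a'+1) : ℝ) with hxs
    set ys := bl n a' + p * (n.choose a' : ℝ) with hys
    have hsum : xs + ys = x + y := by
      rw [hs, hxs, hys, bl_pascal n a']
      have : ((n+1).choose (a'+1) : ℝ) = (n.choose a' : ℝ) + (n.choose (a'+1) : ℝ) := by
        exact_mod_cast congrArg (fun x : ℕ => (x:ℝ)) (Nat.choose_succ_succ n a')
      rw [this]; ring
    have hffxs : ff n xs = bl n (a'+2) - 1 + p * (n.choose (a'+2) : ℝ) := ff_rep n (a'+1) hp0 hp1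
    have hffys : ff n ys = bl n (a'+1) - 1 + p * (n.choose (a'+1) : ℝ) := ff_rep n a' hp0 hp1
    have hkey2 : ff n ys + 1 = xs := by rw [hffys, hxs]; ring
    have hkey3 : ff n xs + xs = ff (n+1) (x+y) := by
      rw [hffxs, hxs, hffs, bl_pascal n (a'+1)]
      have : ((n+1).choose (a'+2) : ℝ) = (n.choose (a'+1) : ℝ) + (n.choose (a'+2) : ℝ) := by
        exact_mod_cast congrArg (fun x : ℕ => (x:ℝ)) (Nat.choose_succ_succ n (a'+1))
      rw [this]; ring
    rcases le_total xs x with hcase | hcase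
    · -- x* ≤ x
      have h1 : ff n xs ≤ ff n x := ff_mono n hcase
      have h2 : xs ≤ max x (ff n y + 1) := le_trans hcase (le_max_left _ _)
      linarith
    · -- x ≤ x*
      have hysy : ys ≤ y := by linarith [hsum]
      have hyxs : y ≤ xs := le_trans hyx hcase
      have hpair := ff_pair n hysy hyxs
      have hc : ys + xs - y = x := by linarith [hsum]
      rw [hc] at hpair
      have h2 : ff n ys + 1 ≤ ff n y + 1 := by linarith [ff_mono n hysy]
      have hmax : ff n y + 1 ≤ max x (ff n y + 1) := le_max_right _ _
      linarith

lemma ff_le_linear (n : ℕ) (s : ℝ) : ff n s ≤ (n:ℝ) * s := by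
  calc ff n s ≤ lineF n 0 s := ff_le_line n (Nat.zero_le n) s
    _ = (n:ℝ) * s := by simp [lineF, bl_one, bl_zero]; ring


section helpers
variable {n : ℕ}

/-- pull a subset of `Fin (n+1)` not containing `last` down to `Fin n` -/
def pulldown (S : Finset (Fin (n+1))) : Finset (Fin n) :=
  Finset.univ.filter (fun a => Fin.castSuccEmb a ∈ S)

lemma last_not_mem_map (S : Finset (Fin n)) :
    Fin.last n ∉ S.map Fin.castSuccEmb := by
  intro h
  obtain ⟨a, _, ha⟩ := Finset.mem_map.mp h
  exact absurd ha (ne_of_lt (Fin.castSucc_lt_last a))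

lemma pd_map {S : Finset (Fin (n+1))} (h : Fin.last n ∉ S) :
    (pulldown S).map Fin.castSuccEmb = S := by
  ext b
  simp only [Finset.mem_map, pulldown, Finset.mem_filter, Finset.mem_univ, true_and]
  constructor
  · rintro ⟨a, ha, rfl⟩; exact ha
  · intro hb
    have hne : b ≠ Fin.last n := fun hbl => h (hbl ▸ hb)
    obtain ⟨a, ha⟩ := Fin.exists_castSucc_eq.mpr hne
    refine ⟨a, ?_, ?_⟩
    · show Fin.castSuccEmb a ∈ S
      have : Fin.castSuccEmb a = b := ha
      rw [this]; exact hb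
    · show Fin.castSuccEmb a = b
      exact ha

lemma insert_last_inj :
    Function.Injective (fun S : Finset (Fin n) => insert (Fin.last n) (S.map Fin.castSuccEmb)) := by
  intro S₁ S₂ h
  have h1 := congrArg (fun X => Finset.erase X (Fin.last n)) h
  simp only at h1
  rw [Finset.erase_insert (last_not_mem_map S₁), Finset.erase_insert (last_not_mem_map S₂)] at h1
  exact Finset.map_injective _ h1

end helpers

theorem main : ∀ (n l : ℕ), 0 < l → ∀ C : Fin l → Finset (Finset (Fin n)),
    (∀ m, IsLowerSet (C m : Set (Finset (Fin n)))) →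
    (∀ i j, (C i).shadow ⊆ C j) →
    ff n ((∑ m, ((C m).card : ℝ)) / l) ≤ (∑ m, ((C m).upShadow.card : ℝ)) / l := by
  intro n
  induction n with
  | zero =>
    intro l hl C _ _
    have h0 : ff 0 ((∑ m, ((C m).card : ℝ)) / l) ≤ 0 := by
      calc ff 0 _ ≤ lineF 0 0 _ := ff_le_line 0 le_rfl _
        _ = 0 := by simp [lineF, bl]
    have h1 : (0:ℝ) ≤ (∑ m, ((C m).upShadow.card : ℝ)) / l := by positivity
    linarith
  | succ n IH =>
    intro l hl C hdown hanti
    have hl0 : (0:ℝ) < l := by exact_mod_cast hl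
    by_cases hA : ∃ m, C m = ∅
    · -- degenerate case: all families ⊆ {∅}
      obtain ⟨m₀, hm₀⟩ := hA
      have hsub : ∀ j, C j ⊆ {∅} := by
        intro j S hS
        rw [Finset.mem_singleton]
        by_contra hne
        obtain ⟨a, ha⟩ := Finset.nonempty_iff_ne_empty.mpr hne
        have : S.erase a ∈ (C j).shadow :=
          Finset.mem_shadow_iff.mpr ⟨S, hS, a, ha, rfl⟩
        have := hanti j m₀ this
        rw [hm₀] at this
        exact absurd this (Finset.notMem_empty _)
      have hpoint : ∀ j, ((C j).upShadow.card : ℝ) = ((n:ℝ)+1) * (C j).card := by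
        intro j
        rcases Finset.subset_singleton_iff.mp (hsub j) with h | h
        · rw [h]; simp
        · rw [h]
          have : (({∅} : Finset (Finset (Fin (n+1)))).upShadow)
              = Finset.univ.map ⟨fun a => {a}, fun a b hab => by
                  have : ({a} : Finset (Fin (n+1))) = {b} := hab
                  simpa using this⟩ := by
            ext t
            simp only [Finset.mem_upShadow_iff, Finset.mem_singleton, Finset.mem_map,
              Finset.mem_univ, true_and, Function.Embedding.coeFn_mk]
            constructor
            · rintro ⟨s, rfl, a, -, rfl⟩; exact ⟨a, by simp; rfl⟩
            · rintro ⟨a, rfl⟩; exact ⟨∅, rfl, a, by simp; rfl⟩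
          rw [this]
          simp
      have hsum : (∑ m, ((C m).upShadow.card : ℝ)) = ((n:ℝ)+1) * ∑ m, ((C m).card : ℝ) := by
        rw [Finset.mul_sum]
        exact Finset.sum_congr rfl fun m _ => hpoint m
      rw [hsum]
      calc ff (n+1) ((∑ m, ((C m).card : ℝ)) / l)
          ≤ ((n+1:ℕ):ℝ) * ((∑ m, ((C m).card : ℝ)) / l) := ff_le_linear (n+1) _
        _ = ((n:ℝ)+1) * (∑ m, ((C m).card : ℝ)) / l := by push_cast; ring
    · -- main case: all families nonempty
      push_neg at hA
      have hmem : ∀ m, (∅ : Finset (Fin (n+1))) ∈ C m := by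
        intro m
        obtain ⟨S, hS⟩ := hA m
        exact hdown m (by simp) hS
      classical
      set B : Fin l → Finset (Finset (Fin n)) :=
        (fun m => Finset.univ.filter (fun S => S.map Fin.castSuccEmb ∈ C m)) with hBdef
      set T : Fin l → Finset (Finset (Fin n)) :=
        (fun m => Finset.univ.filter
          (fun S => insert (Fin.last n) (S.map Fin.castSuccEmb) ∈ C m)) with hTdef
      have hmemB : ∀ m (S : Finset (Fin n)), S ∈ B m ↔ S.map Fin.castSuccEmb ∈ C m := by
        intro m S; simp [hBdef]
      have hmemT : ∀ m (S : Finset (Fin n)),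
          S ∈ T m ↔ insert (Fin.last n) (S.map Fin.castSuccEmb) ∈ C m := by
        intro m S; simp [hTdef]
      have hBlow : ∀ m, IsLowerSet ((B m : Set (Finset (Fin n)))) := by
        intro m S S' hle hS
        simp only [Finset.mem_coe, hmemB] at *
        exact hdown m (Finset.map_subset_map.mpr hle) hS
      have hTlow : ∀ m, IsLowerSet ((T m : Set (Finset (Fin n)))) := by
        intro m S S' hle hS
        simp only [Finset.mem_coe, hmemT] at *
        exact hdown m (Finset.insert_subset_insert _ (Finset.map_subset_map.mpr hle)) hS
      have hBcross : ∀ i j, (B i).shadow ⊆ B j := by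
        intro i j t ht
        obtain ⟨S, hS, a, haS, rfl⟩ := Finset.mem_shadow_iff.mp ht
        rw [hmemB]
        rw [Finset.map_erase]
        refine hanti i j (Finset.mem_shadow_iff.mpr ⟨S.map Fin.castSuccEmb, (hmemB i S).mp hS,
          Fin.castSuccEmb a, Finset.mem_map_of_mem _ haS, rfl⟩)
      have hTcross : ∀ i j, (T i).shadow ⊆ T j := by
        intro i j t ht
        obtain ⟨S, hS, a, haS, rfl⟩ := Finset.mem_shadow_iff.mp ht
        rw [hmemT]
        rw [Finset.map_erase]
        have hne : Fin.last n ≠ Fin.castSuccEmb a := (ne_of_lt (Fin.castSucc_lt_last a)).symm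
        rw [← Finset.erase_insert_of_ne hne]
        refine hanti i j (Finset.mem_shadow_iff.mpr
          ⟨insert (Fin.last n) (S.map Fin.castSuccEmb), (hmemT i S).mp hS,
            Fin.castSuccEmb a, Finset.mem_insert_of_mem (Finset.mem_map_of_mem _ haS), rfl⟩)
      have hTB : ∀ m, T m ⊆ B m := by
        intro m S hS
        rw [hmemB]
        exact hdown m (Finset.subset_insert _ _) ((hmemT m S).mp hS)
      have hBne : ∀ m, (∅ : Finset (Fin n)) ∈ B m := by
        intro m
        rw [hmemB, Finset.map_empty]
        exact hmem m
      -- cardinality split of C m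
      have hcard : ∀ m, (C m).card = (B m).card + (T m).card := by
        intro m
        have hsplit := Finset.card_filter_add_card_filter_not
          (s := C m) (p := fun S => Fin.last n ∈ S)
        have h1 : (C m).filter (fun S => ¬ Fin.last n ∈ S)
            = (B m).image (fun S => S.map Fin.castSuccEmb) := by
          ext S
          simp only [Finset.mem_filter, Finset.mem_image]
          constructor
          · rintro ⟨hS, hlast⟩
            exact ⟨pulldown S, (hmemB m _).mpr (by rw [pd_map hlast]; exact hS), pd_map hlast⟩
          · rintro ⟨S', hS', rfl⟩
            exact ⟨(hmemB m S').mp hS', last_not_mem_map S'⟩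
        have h2 : (C m).filter (fun S => Fin.last n ∈ S)
            = (T m).image (fun S => insert (Fin.last n) (S.map Fin.castSuccEmb)) := by
          ext S
          simp only [Finset.mem_filter, Finset.mem_image]
          constructor
          · rintro ⟨hS, hlast⟩
            have hle : Fin.last n ∉ S.erase (Fin.last n) := Finset.notMem_erase _ _
            refine ⟨pulldown (S.erase (Fin.last n)), (hmemT m _).mpr ?_, ?_⟩
            · rw [pd_map hle, Finset.insert_erase hlast]; exact hS
            · rw [pd_map hle, Finset.insert_erase hlast]
          · rintro ⟨S', hS', rfl⟩
            exact ⟨(hmemT m S').mp hS', Finset.mem_insert_self _ _⟩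
        have c1 : ((C m).filter (fun S => ¬ Fin.last n ∈ S)).card = (B m).card := by
          rw [h1, Finset.card_image_of_injective _ (Finset.map_injective _)]
        have c2 : ((C m).filter (fun S => Fin.last n ∈ S)).card = (T m).card := by
          rw [h2, Finset.card_image_of_injective _ insert_last_inj]
        omega
      -- upper shadow split of C m
      have hshadow : ∀ m, ((C m).upShadow).card
          = ((B m).upShadow).card + ((B m) ∪ (T m).upShadow).card := by
        intro m
        have hsplit := Finset.card_filter_add_card_filter_not
          (s := (C m).upShadow) (p := fun S => Fin.last n ∈ S)
        have h1 : ((C m).upShadow).filter (fun S => ¬ Fin.last n ∈ S)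
            = ((B m).upShadow).image (fun S => S.map Fin.castSuccEmb) := by
          ext U
          simp only [Finset.mem_filter, Finset.mem_image]
          constructor
          · rintro ⟨hU, hlast⟩
            obtain ⟨V, hV, b, hbV, rfl⟩ := Finset.mem_upShadow_iff.mp hU
            have hlastV : Fin.last n ∉ V := fun h => hlast (Finset.mem_insert_of_mem h)
            have hbne : b ≠ Fin.last n := fun h => hlast (h ▸ Finset.mem_insert_self b V)
            obtain ⟨b₀, hb₀⟩ := Fin.exists_castSucc_eq.mpr hbne
            have hb₀' : Fin.castSuccEmb b₀ = b := hb₀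
            refine ⟨insert b₀ (pulldown V), ?_, ?_⟩
            · refine Finset.mem_upShadow_iff.mpr ⟨pulldown V, (hmemB m _).mpr ?_, b₀, ?_, rfl⟩
              · rw [pd_map hlastV]; exact hV
              · intro hc
                apply hbV
                have : Fin.castSuccEmb b₀ ∈ (pulldown V).map Fin.castSuccEmb :=
                  Finset.mem_map_of_mem _ hc
                rw [pd_map hlastV, hb₀'] at this
                exact this
            · rw [Finset.map_insert, pd_map hlastV, hb₀']
          · rintro ⟨U', hU', rfl⟩
            obtain ⟨V', hV', a, haV', rfl⟩ := Finset.mem_upShadow_iff.mp hU'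
            constructor
            · refine Finset.mem_upShadow_iff.mpr ⟨V'.map Fin.castSuccEmb, (hmemB m V').mp hV',
                Fin.castSuccEmb a, ?_, ?_⟩
              · intro hc
                exact haV' ((Finset.mem_map' _).mp hc)
              · rw [Finset.map_insert]
            · exact last_not_mem_map _
        have h2 : ((C m).upShadow).filter (fun S => Fin.last n ∈ S)
            = ((B m) ∪ (T m).upShadow).image
                (fun S => insert (Fin.last n) (S.map Fin.castSuccEmb)) := by
          ext U
          simp only [Finset.mem_filter, Finset.mem_image, Finset.mem_union]
          constructor
          · rintro ⟨hU, hlast⟩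
            obtain ⟨V, hV, b, hbV, rfl⟩ := Finset.mem_upShadow_iff.mp hU
            by_cases hbl : b = Fin.last n
            · subst hbl
              refine ⟨pulldown V, Or.inl ((hmemB m _).mpr (by rw [pd_map hbV]; exact hV)), ?_⟩
              rw [pd_map hbV]
            · have hlastV : Fin.last n ∈ V := by
                rcases Finset.mem_insert.mp hlast with h | h
                · exact absurd h.symm hbl
                · exact h
              obtain ⟨b₀, hb₀⟩ := Fin.exists_castSucc_eq.mpr hbl
              have hb₀' : Fin.castSuccEmb b₀ = b := hb₀
              have hleV : Fin.last n ∉ V.erase (Fin.last n) := Finset.notMem_erase _ _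
              refine ⟨insert b₀ (pulldown (V.erase (Fin.last n))), Or.inr ?_, ?_⟩
              · refine Finset.mem_upShadow_iff.mpr
                  ⟨pulldown (V.erase (Fin.last n)), (hmemT m _).mpr ?_, b₀, ?_, rfl⟩
                · rw [pd_map hleV, Finset.insert_erase hlastV]; exact hV
                · intro hc
                  apply hbV
                  have : Fin.castSuccEmb b₀ ∈ (pulldown (V.erase (Fin.last n))).map
                      Fin.castSuccEmb := Finset.mem_map_of_mem _ hc
                  rw [pd_map hleV, hb₀'] at this
                  exact Finset.mem_of_mem_erase this
              · rw [Finset.map_insert, pd_map hleV, hb₀', Finset.insert_comm,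
                  Finset.insert_erase hlastV]
          · rintro ⟨W, hW, rfl⟩
            refine ⟨?_, Finset.mem_insert_self _ _⟩
            rcases hW with hW | hW
            · exact Finset.mem_upShadow_iff.mpr ⟨W.map Fin.castSuccEmb, (hmemB m W).mp hW,
                Fin.last n, last_not_mem_map W, rfl⟩
            · obtain ⟨V', hV', a, haV', rfl⟩ := Finset.mem_upShadow_iff.mp hW
              have : insert (Fin.last n) ((insert a V').map Fin.castSuccEmb)
                  = insert (Fin.castSuccEmb a) (insert (Fin.last n) (V'.map Fin.castSuccEmb)) := by
                rw [Finset.map_insert, Finset.insert_comm]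
              rw [this]
              refine Finset.mem_upShadow_iff.mpr ⟨insert (Fin.last n) (V'.map Fin.castSuccEmb),
                (hmemT m V').mp hV', Fin.castSuccEmb a, ?_, rfl⟩
              intro hc
              rcases Finset.mem_insert.mp hc with h | h
              · exact (ne_of_lt (Fin.castSucc_lt_last a)) h
              · exact haV' ((Finset.mem_map' _).mp h)
        have c1 : (((C m).upShadow).filter (fun S => ¬ Fin.last n ∈ S)).card
            = ((B m).upShadow).card := by
          rw [h1, Finset.card_image_of_injective _ (Finset.map_injective _)]
        have c2 : (((C m).upShadow).filter (fun S => Fin.last n ∈ S)).card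
            = ((B m) ∪ (T m).upShadow).card := by
          rw [h2, Finset.card_image_of_injective _ insert_last_inj]
        omega
      -- auxiliary cardinality bounds
      have hU1 : ∀ m, (B m).card ≤ ((B m) ∪ (T m).upShadow).card :=
        fun m => Finset.card_le_card Finset.subset_union_left
      have hU2 : ∀ m, ((T m).upShadow).card + 1 ≤ ((B m) ∪ (T m).upShadow).card := by
        intro m
        have hemp : (∅ : Finset (Fin n)) ∉ (T m).upShadow := by
          intro h
          obtain ⟨s, _, a, _, hins⟩ := Finset.mem_upShadow_iff.mp h
          exact (Finset.insert_ne_empty a s) hins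
        have hsub : insert (∅ : Finset (Fin n)) ((T m).upShadow) ⊆ (B m) ∪ (T m).upShadow := by
          intro t ht
          rcases Finset.mem_insert.mp ht with rfl | ht
          · exact Finset.mem_union_left _ (hBne m)
          · exact Finset.mem_union_right _ ht
        calc ((T m).upShadow).card + 1 = (insert (∅ : Finset (Fin n)) ((T m).upShadow)).card :=
              (Finset.card_insert_of_notMem hemp).symm
          _ ≤ _ := Finset.card_le_card hsub
      -- real arithmetic
      have hIHB := IH l hl B hBlow hBcross
      have hIHT := IH l hl T hTlow hTcross
      set xr := (∑ m, ((B m).card : ℝ)) / l with hxr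
      set yr := (∑ m, ((T m).card : ℝ)) / l with hyr
      have hy0 : 0 ≤ yr := by
        rw [hyr]
        apply div_nonneg _ (le_of_lt hl0)
        exact Finset.sum_nonneg fun m _ => by positivity
      have hyx : yr ≤ xr := by
        rw [hyr, hxr]
        apply (div_le_div_iff_of_pos_right hl0).mpr
        apply Finset.sum_le_sum
        intro m _
        exact_mod_cast Finset.card_le_card (hTB m)
      have hx2 : xr ≤ 2^n := by
        rw [hxr, div_le_iff₀ hl0]
        calc (∑ m, ((B m).card : ℝ)) ≤ ∑ _m : Fin l, (2^n : ℝ) := by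
              apply Finset.sum_le_sum
              intro m _
              have h1 : (B m).card ≤ 2^n := by
                calc (B m).card ≤ (Finset.univ : Finset (Finset (Fin n))).card :=
                      Finset.card_le_univ _
                  _ = 2^n := by rw [Finset.card_univ, Fintype.card_finset, Fintype.card_fin]
              exact_mod_cast h1
          _ = 2^n * l := by rw [Finset.sum_const, Finset.card_univ, Fintype.card_fin]; ring
      have hxy : (∑ m, ((C m).card : ℝ)) / l = xr + yr := by
        rw [hxr, hyr, ← add_div]
        congr 1
        rw [← Finset.sum_add_distrib]
        apply Finset.sum_congr rfl
        intro m _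
        rw [hcard m]
        push_cast
        ring
      have hδ : (∑ m, (((C m).upShadow).card : ℝ))
          = (∑ m, (((B m).upShadow).card : ℝ)) + ∑ m, ((((B m) ∪ (T m).upShadow)).card : ℝ) := by
        rw [← Finset.sum_add_distrib]
        apply Finset.sum_congr rfl
        intro m _
        rw [hshadow m]
        push_cast
        ring
      have hmaxb : max xr (ff n yr + 1) ≤ (∑ m, ((((B m) ∪ (T m).upShadow)).card : ℝ)) / l := by
        apply max_le
        · rw [hxr]
          apply (div_le_div_iff_of_pos_right hl0).mpr
          apply Finset.sum_le_sum
          intro m _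
          exact_mod_cast hU1 m
        · have h2 : (∑ m, (((T m).upShadow).card : ℝ)) + l
              ≤ ∑ m, ((((B m) ∪ (T m).upShadow)).card : ℝ) := by
            have : (∑ m, (((T m).upShadow).card : ℝ)) + l
                = ∑ m : Fin l, ((((T m).upShadow).card : ℝ) + 1) := by
              rw [Finset.sum_add_distrib, Finset.sum_const, Finset.card_univ, Fintype.card_fin]
              simp
            rw [this]
            apply Finset.sum_le_sum
            intro m _
            exact_mod_cast hU2 m
          calc ff n yr + 1 ≤ (∑ m, (((T m).upShadow).card : ℝ)) / l + 1 := by linarith [hIHT]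
            _ = ((∑ m, (((T m).upShadow).card : ℝ)) + l) / l := by rw [add_div, div_self (ne_of_gt hl0)]
            _ ≤ _ := (div_le_div_iff_of_pos_right hl0).mpr h2
      rw [hxy]
      calc ff (n+1) (xr + yr) ≤ ff n xr + max xr (ff n yr + 1) := glue n hy0 hyx hx2
        _ ≤ (∑ m, (((B m).upShadow).card : ℝ)) / l
            + (∑ m, ((((B m) ∪ (T m).upShadow)).card : ℝ)) / l := by
            linarith [hIHB, hmaxb]
        _ = (∑ m, (((C m).upShadow).card : ℝ)) / l := by
            rw [hδ, ← add_div]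


theorem stmt19 (n l : ℕ) (hl : 0 < l) (C : Fin l → Finset (Finset (Fin n)))
    (hdown : ∀ m, IsLowerSet (C m : Set (Finset (Fin n))))
    (hanti : ∀ i j : Fin l, (C i).shadow ⊆ C j)
    (k : ℕ) (p : ℝ) (hp0 : 0 ≤ p) (hp1 : p < 1)
    (havg : (∑ m : Fin l, ((C m).card : ℝ)) / l
      = (∑ i ∈ Finset.range k, (n.choose i : ℝ)) + p * n.choose k) :
    (∑ i ∈ Finset.range k, (n.choose (i + 1) : ℝ)) + p * n.choose (k + 1)
      ≤ (∑ m : Fin l, ((C m).upShadow.card : ℝ)) / l := by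
  have hmain := main n l hl C hdown hanti
  have hbl : (∑ i ∈ Finset.range k, (n.choose i : ℝ)) = bl n k := rfl
  rw [hbl] at havg
  rw [havg, ff_rep n k hp0 (le_of_lt hp1)] at hmain
  have htar : (∑ i ∈ Finset.range k, (n.choose (i+1) : ℝ)) = bl n (k+1) - 1 := by
    have h := Finset.sum_range_succ' (fun i => (n.choose i : ℝ)) k
    simp only [Nat.choose_zero_right, Nat.cast_one] at h
    have hbl1 : bl n (k+1) = (∑ i ∈ Finset.range k, (n.choose (i+1):ℝ)) + 1 := h
    linarith
  rw [htar]
  linarith [hmain]
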